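/- In the setting of clustered data with global radius δ, log-likelihood ℓ satisfying for every θ: x ↦ ℓ(θ, x) differentiable, L₁-Lipschitz, with gradient L₂-Lipschitz and (1/γ)-Lipschitz (γ > 0, 0 < L₁, 0 < L₂, L₁ ≥ 1), strictly positive prior density p₀ : ℝ^k → ℝ, and finite positive normalizing constants Z = ∫ p₀(θ) exp(Σ_i ℓ(θ, x_i)) dθ and Z̃ = ∫ p₀(θ) exp(Σ_j n_j ℓ(θ, μ_j)) dθ, define the exact posterior density p(θ|X) = (1/Z) p₀(θ) exp(Σ_{i=1}^N ℓ(θ, x_i)) and the approximate posterior density p̃(θ|X) = (1/Z̃) p₀(θ) exp(Σ_{j=1}^c n_j ℓ(θ, μ_j)). Then for every θ ∈ ℝ^k, |ln( p(θ|X) / p̃(θ|X) )| ≤ 2 K₁ δ², where K₁ = L₁L₂ N + N/(2γ). -/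
import Mathlib


open Finset MeasureTheory InnerProductSpace

lemma taylor_bound {d : ℕ} (f : EuclideanSpace ℝ (Fin d) → ℝ)
    (hf : Differentiable ℝ f) (L : ℝ) (hL : 0 ≤ L)
    (hg : ∀ u v, ‖gradient f u - gradient f v‖ ≤ L * ‖u - v‖)
    (u v : EuclideanSpace ℝ (Fin d)) :
    |f u - f v - ⟪gradient f v, u - v⟫_ℝ| ≤ L * ‖u - v‖ ^ 2 := by
  set g := gradient f v
  set h : EuclideanSpace ℝ (Fin d) → ℝ := fun w => f w - ⟪g, w⟫_ℝ with hh
  have key : ‖h u - h v‖ ≤ (L * ‖u - v‖) * ‖u - v‖ := by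
    apply Convex.norm_image_sub_le_of_norm_hasFDerivWithin_le
      (f' := fun w => (toDual ℝ _ (gradient f w)) - (toDual ℝ _ g))
      (s := segment ℝ v u)
    · intro w hw
      have h1 : HasFDerivAt f (toDual ℝ _ (gradient f w)) w :=
        ((hf w).hasGradientAt).hasFDerivAt
      have h2 : HasFDerivAt (fun w : EuclideanSpace ℝ (Fin d) => ⟪g, w⟫_ℝ)
          (toDual ℝ _ g) w := (toDual ℝ _ g).hasFDerivAt
      exact (h1.sub h2).hasFDerivWithinAt
    · intro w hw
      rw [← map_sub]
      rw [(toDual ℝ (EuclideanSpace ℝ (Fin d))).norm_map]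
      calc ‖gradient f w - g‖ ≤ L * ‖w - v‖ := hg w v
        _ ≤ L * ‖u - v‖ := by
            apply mul_le_mul_of_nonneg_left _ hL
            obtain ⟨a, b, ha, hb, hab, rfl⟩ := hw
            have : a • v + b • u - v = b • (u - v) := by
              rw [smul_sub]; rw [show a = 1 - b by linarith]
              module
            rw [this, norm_smul]
            simpa [abs_of_nonneg hb] using
              mul_le_of_le_one_left (norm_nonneg _) (by simpa [abs_of_nonneg hb] using hab ▸ (by linarith : b ≤ 1))
    · exact convex_segment v u
    · exact left_mem_segment ℝ v u
    · exact right_mem_segment ℝ v u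
  have : h u - h v = f u - f v - ⟪g, u - v⟫_ℝ := by
    simp [hh, inner_sub_right]; ring
  rw [this] at key
  calc |f u - f v - ⟪g, u - v⟫_ℝ| ≤ (L * ‖u - v‖) * ‖u - v‖ := key
    _ = L * ‖u - v‖ ^ 2 := by ring


/-- For the exact posterior density `p(θ|X) = (1/Z) p₀(θ) exp(∑ᵢ ℓ(θ, xᵢ))` and the
approximate posterior density `p̃(θ|X) = (1/Z̃) p₀(θ) exp(∑ⱼ nⱼ ℓ(θ, μⱼ))` built from
the cluster centroids, the log density ratio is uniformly bounded:
`|ln(p(θ|X)/p̃(θ|X))| ≤ 2 K₁ δ²` with `K₁ = L₁ L₂ N + N/(2γ)`. -/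
theorem abs_log_posterior_ratio_le
    {d k c : ℕ} (hc : 0 < c) (N : ℕ) (n : Fin c → ℕ) (hn : ∀ j, 0 < n j)
    (hN : ∑ j, n j = N)
    (x : (j : Fin c) → Fin (n j) → EuclideanSpace ℝ (Fin d))
    (μ : Fin c → EuclideanSpace ℝ (Fin d))
    (hμ : ∀ j, μ j = ((n j : ℝ))⁻¹ • ∑ i, x j i)
    (δ : ℝ)
    (hδ : IsGreatest {r : ℝ | ∃ j i, r = ‖x j i - μ j‖} δ)
    (γ L₁ L₂ : ℝ) (hγ : 0 < γ) (hL₁ : 0 < L₁) (hL₂ : 0 < L₂) (hL₁1 : 1 ≤ L₁)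
    (ℓ : EuclideanSpace ℝ (Fin k) → EuclideanSpace ℝ (Fin d) → ℝ)
    (hdiff : ∀ θ, Differentiable ℝ (ℓ θ))
    (hLip : ∀ θ (u v : EuclideanSpace ℝ (Fin d)), |ℓ θ u - ℓ θ v| ≤ L₁ * ‖u - v‖)
    (hgradLip : ∀ θ (u v : EuclideanSpace ℝ (Fin d)),
      ‖gradient (ℓ θ) u - gradient (ℓ θ) v‖ ≤ L₂ * ‖u - v‖)
    (hgradLip' : ∀ θ (u v : EuclideanSpace ℝ (Fin d)),
      ‖gradient (ℓ θ) u - gradient (ℓ θ) v‖ ≤ (1 / γ) * ‖u - v‖)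
    (p₀ : EuclideanSpace ℝ (Fin k) → ℝ) (hp₀ : ∀ θ, 0 < p₀ θ)
    (Z Ztil : ℝ)
    (hZdef : Z = ∫ θ : EuclideanSpace ℝ (Fin k),
      p₀ θ * Real.exp (∑ j, ∑ i, ℓ θ (x j i)))
    (hZint : Integrable (fun θ : EuclideanSpace ℝ (Fin k) =>
      p₀ θ * Real.exp (∑ j, ∑ i, ℓ θ (x j i))))
    (hZpos : 0 < Z)
    (hZtdef : Ztil = ∫ θ : EuclideanSpace ℝ (Fin k),
      p₀ θ * Real.exp (∑ j, (n j : ℝ) * ℓ θ (μ j)))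
    (hZtint : Integrable (fun θ : EuclideanSpace ℝ (Fin k) =>
      p₀ θ * Real.exp (∑ j, (n j : ℝ) * ℓ θ (μ j))))
    (hZtpos : 0 < Ztil)
    (θ : EuclideanSpace ℝ (Fin k)) :
    |Real.log
        (((1 / Z) * p₀ θ * Real.exp (∑ j, ∑ i, ℓ θ (x j i))) /
          ((1 / Ztil) * p₀ θ * Real.exp (∑ j, (n j : ℝ) * ℓ θ (μ j))))| ≤
      2 * (L₁ * L₂ * N + N / (2 * γ)) * δ ^ 2 := by
  have hδ0 : 0 ≤ δ := by
    obtain ⟨j, i, hji⟩ := hδ.1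
    rw [hji]; exact norm_nonneg _
  have hnorm : ∀ j i, ‖x j i - μ j‖ ≤ δ := fun j i => hδ.2 ⟨j, i, rfl⟩
  set K : ℝ := L₂ * N * δ ^ 2 with hK
  set A : EuclideanSpace ℝ (Fin k) → ℝ := fun θ => ∑ j, ∑ i, ℓ θ (x j i) with hA
  set B : EuclideanSpace ℝ (Fin k) → ℝ := fun θ => ∑ j, (n j : ℝ) * ℓ θ (μ j) with hB
  -- pointwise bound |A θ - B θ| ≤ K for all θ
  have hAB : ∀ θ, |A θ - B θ| ≤ K := by
    intro θ
    have hcluster : ∀ j, |(∑ i, ℓ θ (x j i)) - (n j : ℝ) * ℓ θ (μ j)|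
        ≤ (n j : ℝ) * (L₂ * δ ^ 2) := by
      intro j
      have hsum0 : ∑ i, (x j i - μ j) = 0 := by
        have hμ' : ((n j : ℝ)) • μ j = ∑ i, x j i := by
          rw [hμ j, smul_inv_smul₀ (by exact_mod_cast (hn j).ne')]
        rw [Finset.sum_sub_distrib, Finset.sum_const, card_univ, Fintype.card_fin,
          ← Nat.cast_smul_eq_nsmul ℝ, hμ', sub_self]
      set g := gradient (ℓ θ) (μ j)
      have hrw : (∑ i, ℓ θ (x j i)) - (n j : ℝ) * ℓ θ (μ j)
          = ∑ i, (ℓ θ (x j i) - ℓ θ (μ j) - ⟪g, x j i - μ j⟫_ℝ) := by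
        rw [Finset.sum_sub_distrib, Finset.sum_sub_distrib, Finset.sum_const, card_univ,
          Fintype.card_fin, ← inner_sum, hsum0, inner_zero_right]
        push_cast; ring
      rw [hrw]
      calc |∑ i, (ℓ θ (x j i) - ℓ θ (μ j) - ⟪g, x j i - μ j⟫_ℝ)|
          ≤ ∑ i, |ℓ θ (x j i) - ℓ θ (μ j) - ⟪g, x j i - μ j⟫_ℝ| :=
            Finset.abs_sum_le_sum_abs _ _
        _ ≤ ∑ _i : Fin (n j), L₂ * δ ^ 2 := by
            apply Finset.sum_le_sum
            intro i _
            calc |ℓ θ (x j i) - ℓ θ (μ j) - ⟪g, x j i - μ j⟫_ℝ|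
                ≤ L₂ * ‖x j i - μ j‖ ^ 2 :=
                  taylor_bound (ℓ θ) (hdiff θ) L₂ hL₂.le (hgradLip θ) (x j i) (μ j)
              _ ≤ L₂ * δ ^ 2 := by
                  apply mul_le_mul_of_nonneg_left _ hL₂.le
                  exact pow_le_pow_left₀ (norm_nonneg _) (hnorm j i) 2
        _ = (n j : ℝ) * (L₂ * δ ^ 2) := by simp [mul_comm]
    calc |A θ - B θ| = |∑ j, ((∑ i, ℓ θ (x j i)) - (n j : ℝ) * ℓ θ (μ j))| := by
          rw [hA, hB, Finset.sum_sub_distrib]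
      _ ≤ ∑ j, |(∑ i, ℓ θ (x j i)) - (n j : ℝ) * ℓ θ (μ j)| := Finset.abs_sum_le_sum_abs _ _
      _ ≤ ∑ j, (n j : ℝ) * (L₂ * δ ^ 2) := Finset.sum_le_sum fun j _ => hcluster j
      _ = K := by rw [← Finset.sum_mul, hK, ← hN]; push_cast; ring
  -- Z ≤ exp K * Ztil and Ztil ≤ exp K * Z
  have hZle : Z ≤ Real.exp K * Ztil := by
    rw [hZdef, hZtdef, ← smul_eq_mul, ← integral_smul]
    apply integral_mono hZint (hZtint.smul (Real.exp K))
    intro θ'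
    have h := (abs_le.mp (hAB θ')).2
    simp only [Pi.smul_apply, smul_eq_mul]
    calc p₀ θ' * Real.exp (∑ j, ∑ i, ℓ θ' (x j i))
        ≤ p₀ θ' * (Real.exp K * Real.exp (∑ j, (n j : ℝ) * ℓ θ' (μ j))) := by
          apply mul_le_mul_of_nonneg_left _ (hp₀ θ').le
          rw [← Real.exp_add]
          apply Real.exp_le_exp.mpr
          simp only [hA, hB] at h; linarith
      _ = Real.exp K * (p₀ θ' * Real.exp (∑ j, (n j : ℝ) * ℓ θ' (μ j))) := by ring
  have hZtle : Ztil ≤ Real.exp K * Z := by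
    rw [hZdef, hZtdef, ← smul_eq_mul, ← integral_smul]
    apply integral_mono hZtint (hZint.smul (Real.exp K))
    intro θ'
    have h := (abs_le.mp (hAB θ')).1
    simp only [Pi.smul_apply, smul_eq_mul]
    calc p₀ θ' * Real.exp (∑ j, (n j : ℝ) * ℓ θ' (μ j))
        ≤ p₀ θ' * (Real.exp K * Real.exp (∑ j, ∑ i, ℓ θ' (x j i))) := by
          apply mul_le_mul_of_nonneg_left _ (hp₀ θ').le
          rw [← Real.exp_add]
          apply Real.exp_le_exp.mpr
          simp only [hA, hB] at h; linarith
      _ = Real.exp K * (p₀ θ' * Real.exp (∑ j, ∑ i, ℓ θ' (x j i))) := by ring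
  -- |log Ztil - log Z| ≤ K
  have hlogZ : |Real.log Ztil - Real.log Z| ≤ K := by
    rw [abs_le]
    constructor
    · have : Real.log Z ≤ Real.log (Real.exp K * Ztil) := Real.log_le_log hZpos hZle
      rw [Real.log_mul (Real.exp_ne_zero K) hZtpos.ne', Real.log_exp] at this
      linarith
    · have : Real.log Ztil ≤ Real.log (Real.exp K * Z) := Real.log_le_log hZtpos hZtle
      rw [Real.log_mul (Real.exp_ne_zero K) hZpos.ne', Real.log_exp] at this
      linarith
  -- simplify log ratio
  have hratio : Real.log
      (((1 / Z) * p₀ θ * Real.exp (A θ)) / ((1 / Ztil) * p₀ θ * Real.exp (B θ)))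
      = (A θ - B θ) + (Real.log Ztil - Real.log Z) := by
    have hZ1 : (0:ℝ) < 1 / Z := one_div_pos.mpr hZpos
    have hZt1 : (0:ℝ) < 1 / Ztil := one_div_pos.mpr hZtpos
    rw [Real.log_div (mul_pos (mul_pos hZ1 (hp₀ θ)) (Real.exp_pos _)).ne'
        (mul_pos (mul_pos hZt1 (hp₀ θ)) (Real.exp_pos _)).ne',
      Real.log_mul (mul_pos hZ1 (hp₀ θ)).ne' (Real.exp_ne_zero _),
      Real.log_mul (mul_pos hZt1 (hp₀ θ)).ne' (Real.exp_ne_zero _),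
      Real.log_mul hZ1.ne' (hp₀ θ).ne',
      Real.log_mul hZt1.ne' (hp₀ θ).ne',
      Real.log_exp, Real.log_exp, one_div, one_div, Real.log_inv, Real.log_inv]
    ring
  have hfinal : |A θ - B θ + (Real.log Ztil - Real.log Z)| ≤ 2 * K :=
    calc |A θ - B θ + (Real.log Ztil - Real.log Z)|
        ≤ |A θ - B θ| + |Real.log Ztil - Real.log Z| := abs_add_le _ _
      _ ≤ K + K := add_le_add (hAB θ) hlogZ
      _ = 2 * K := by ring
  have hKle : 2 * K ≤ 2 * (L₁ * L₂ * N + N / (2 * γ)) * δ ^ 2 := by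
    rw [hK]
    have h1 : L₂ * N ≤ L₁ * L₂ * N + N / (2 * γ) := by
      have : L₂ * N ≤ L₁ * L₂ * N := by
        nlinarith [mul_nonneg (mul_nonneg (sub_nonneg.mpr hL₁1) hL₂.le)
          (Nat.cast_nonneg (α := ℝ) N)]
      have h2 : (0:ℝ) ≤ N / (2 * γ) := by positivity
      linarith
    nlinarith [sq_nonneg δ]
  calc |Real.log (((1 / Z) * p₀ θ * Real.exp (A θ)) /
        ((1 / Ztil) * p₀ θ * Real.exp (B θ)))|
      = |A θ - B θ + (Real.log Ztil - Real.log Z)| := by rw [hratio]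
    _ ≤ 2 * K := hfinal
    _ ≤ 2 * (L₁ * L₂ * N + N / (2 * γ)) * δ ^ 2 := hKle
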